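/- arXiv:2509.21734 — 4 statements merged into one kernel-verified Lean document; each statement's English description precedes it below -/
import Mathlib

section
/- In the finite-horizon optimal stopping setup, define the threshold stopping policy φ* by φ*_k(s) = 1 if and only if g_k(s) ≥ ∫ (h_k(s,s') + V_{k+1}(s')) dκ_k(s)(ds'). Then W^{φ*}_k(s) = V_k(s) for every 0 ≤ k ≤ N and every s ∈ S; in particular, φ* maximizes the value W^φ_0(s_0) over all stopping policies, i.e., the rule 'stop exactly when the immediate stopping reward is at least the expected continuation value' is an optimal stopping policy. -/
open MeasureTheory ProbabilityTheory

private lemma osp_abs_int_le {S : Type*} [MeasurableSpace S] (μ : Measure S)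
    [IsProbabilityMeasure μ] {f : S → ℝ} {C : ℝ} (hC : ∀ s, |f s| ≤ C) :
    |∫ s, f s ∂μ| ≤ C := by
  have := norm_integral_le_of_norm_le_const (μ := μ) (f := f) (C := C)
    (ae_of_all _ fun s => by simpa using hC s)
  simpa using this

private lemma osp_integrable {S : Type*} [MeasurableSpace S] (μ : Measure S)
    [IsProbabilityMeasure μ] {f : S → ℝ} (hm : Measurable f) {C : ℝ}
    (hC : ∀ s, |f s| ≤ C) : Integrable f μ :=
  Integrable.mono' (integrable_const C) hm.aestronglyMeasurable
    (ae_of_all _ fun s => by simpa using hC s)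

private lemma osp_int_meas {S : Type*} [MeasurableSpace S] (κ : Kernel S S)
    [IsSFiniteKernel κ] {f : S → S → ℝ} (hf : Measurable (Function.uncurry f)) :
    Measurable fun s => ∫ s', f s s' ∂κ s :=
  (StronglyMeasurable.integral_kernel_prod_right' hf.stronglyMeasurable).measurable

/-- Measurability and boundedness of the Snell envelope. -/
private lemma osp_V_props {S : Type*} [MeasurableSpace S] (N : ℕ)
    (κ : ℕ → Kernel S S) (hκ : ∀ k < N, IsMarkovKernel (κ k))
    (g : ℕ → S → ℝ) (h : ℕ → S → S → ℝ)
    (hg_meas : ∀ k ≤ N, Measurable (g k))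
    (hg_bdd : ∀ k ≤ N, ∃ C : ℝ, ∀ s, |g k s| ≤ C)
    (hh_meas : ∀ k < N, Measurable (Function.uncurry (h k)))
    (hh_bdd : ∀ k < N, ∃ C : ℝ, ∀ s s', |h k s s'| ≤ C)
    (V : ℕ → S → ℝ)
    (hVN : ∀ s, V N s = g N s)
    (hVk : ∀ k < N, ∀ s, V k s =
      max (g k s) (∫ s', (h k s s' + V (k + 1) s') ∂(κ k s))) :
    ∀ d k, k + d = N → Measurable (V k) ∧ ∃ C : ℝ, ∀ s, |V k s| ≤ C := by
  intro d
  induction d with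
  | zero =>
    intro k hk
    simp only [Nat.add_zero] at hk
    subst hk
    have hVg : V _ = g _ := funext hVN
    rw [hVg]
    exact ⟨hg_meas _ le_rfl, hg_bdd _ le_rfl⟩
  | succ d ih =>
    intro k hk
    have hkN : k < N := by omega
    have hk1 : (k + 1) + d = N := by omega
    obtain ⟨hVm, C1, hC1⟩ := ih (k + 1) hk1
    haveI := hκ k hkN
    obtain ⟨Ch, hCh⟩ := hh_bdd k hkN
    obtain ⟨Cg, hCg⟩ := hg_bdd k (le_of_lt hkN)
    have hFm : Measurable (Function.uncurry fun s s' => h k s s' + V (k + 1) s') := by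
      exact (hh_meas k hkN).add (hVm.comp measurable_snd)
    have hFbd : ∀ s s', |h k s s' + V (k + 1) s'| ≤ Ch + C1 := fun s s' =>
      (abs_add_le _ _).trans (add_le_add (hCh s s') (hC1 s'))
    have hIm : Measurable fun s => ∫ s', (h k s s' + V (k + 1) s') ∂(κ k s) :=
      osp_int_meas (κ k) hFm
    have hVeq : V k = fun s =>
        max (g k s) (∫ s', (h k s s' + V (k + 1) s') ∂(κ k s)) := funext (hVk k hkN)
    constructor
    · rw [hVeq]; exact (hg_meas k hkN.le).max hIm
    · refine ⟨max Cg (Ch + C1), fun s => ?_⟩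
      rw [hVeq]
      have hI : |∫ s', (h k s s' + V (k + 1) s') ∂(κ k s)| ≤ Ch + C1 :=
        osp_abs_int_le (κ k s) (fun s' => hFbd s s')
      have := abs_max_le_max_abs_abs (a := g k s)
        (b := ∫ s', (h k s s' + V (k + 1) s') ∂(κ k s))
      exact this.trans (max_le_max (hCg s) hI)

/-- Measurability and boundedness of the value functions of an arbitrary policy. -/
private lemma osp_W_props {S : Type*} [MeasurableSpace S] (N : ℕ)
    (κ : ℕ → Kernel S S) (hκ : ∀ k < N, IsMarkovKernel (κ k))
    (g : ℕ → S → ℝ) (h : ℕ → S → S → ℝ)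
    (hg_meas : ∀ k ≤ N, Measurable (g k))
    (hg_bdd : ∀ k ≤ N, ∃ C : ℝ, ∀ s, |g k s| ≤ C)
    (hh_meas : ∀ k < N, Measurable (Function.uncurry (h k)))
    (hh_bdd : ∀ k < N, ∃ C : ℝ, ∀ s s', |h k s s'| ≤ C)
    (φ : ℕ → S → Bool) (hφ : ∀ k < N, Measurable (φ k))
    (W : ℕ → S → ℝ)
    (hWN : ∀ s, W N s = g N s)
    (hWk : ∀ k < N, ∀ s, W k s =
      if φ k s then g k s else ∫ s', (h k s s' + W (k + 1) s') ∂(κ k s)) :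
    ∀ d k, k + d = N → Measurable (W k) ∧ ∃ C : ℝ, ∀ s, |W k s| ≤ C := by
  intro d
  induction d with
  | zero =>
    intro k hk
    simp only [Nat.add_zero] at hk
    subst hk
    have hWg : W _ = g _ := funext hWN
    rw [hWg]
    exact ⟨hg_meas _ le_rfl, hg_bdd _ le_rfl⟩
  | succ d ih =>
    intro k hk
    have hkN : k < N := by omega
    have hk1 : (k + 1) + d = N := by omega
    obtain ⟨hWm, C1, hC1⟩ := ih (k + 1) hk1
    haveI := hκ k hkN
    obtain ⟨Ch, hCh⟩ := hh_bdd k hkN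
    obtain ⟨Cg, hCg⟩ := hg_bdd k (le_of_lt hkN)
    have hFm : Measurable (Function.uncurry fun s s' => h k s s' + W (k + 1) s') :=
      (hh_meas k hkN).add (hWm.comp measurable_snd)
    have hFbd : ∀ s s', |h k s s' + W (k + 1) s'| ≤ Ch + C1 := fun s s' =>
      (abs_add_le _ _).trans (add_le_add (hCh s s') (hC1 s'))
    have hIm : Measurable fun s => ∫ s', (h k s s' + W (k + 1) s') ∂(κ k s) :=
      osp_int_meas (κ k) hFm
    have hset : MeasurableSet {s | φ k s = true} :=
      (hφ k hkN) (measurableSet_singleton true)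
    have hWeq : W k = fun s =>
        if φ k s then g k s else ∫ s', (h k s s' + W (k + 1) s') ∂(κ k s) :=
      funext (hWk k hkN)
    constructor
    · rw [hWeq]
      exact Measurable.ite hset (hg_meas k hkN.le) hIm
    · refine ⟨max Cg (Ch + C1), fun s => ?_⟩
      rw [hWeq]
      by_cases hb : φ k s = true
      · simp only [hb, if_true]
        exact (hCg s).trans (le_max_left _ _)
      · simp only [hb, if_false]
        exact (osp_abs_int_le (κ k s) (fun s' => hFbd s s')).trans (le_max_right _ _)

/-- **Optimality of the threshold stopping policy.**
In the finite-horizon optimal stopping setup, the stopping policy `φ*` that stops at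
stage `k` in state `s` iff `g k s ≥ ∫ (h k s s' + V (k+1) s') dκ k s` satisfies
`W^{φ*} k s = V k s` for all `k ≤ N` and `s`; in particular it maximizes the value
`W^φ 0 s₀` over all stopping policies `φ`. -/
theorem threshold_stopping_policy_is_optimal
    {S : Type*} [MeasurableSpace S] (N : ℕ)
    (κ : ℕ → ProbabilityTheory.Kernel S S) (hκ : ∀ k < N, IsMarkovKernel (κ k))
    (g : ℕ → S → ℝ) (h : ℕ → S → S → ℝ)
    (hg_meas : ∀ k ≤ N, Measurable (g k))
    (hg_bdd : ∀ k ≤ N, ∃ C : ℝ, ∀ s, |g k s| ≤ C)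
    (hh_meas : ∀ k < N, Measurable (Function.uncurry (h k)))
    (hh_bdd : ∀ k < N, ∃ C : ℝ, ∀ s s', |h k s s'| ≤ C)
    -- the Snell envelope V
    (V : ℕ → S → ℝ)
    (hVN : ∀ s, V N s = g N s)
    (hVk : ∀ k < N, ∀ s, V k s =
      max (g k s) (∫ s', (h k s s' + V (k + 1) s') ∂(κ k s)))
    -- the threshold stopping policy φ*
    (φstar : ℕ → S → Bool) (hφstar_meas : ∀ k < N, Measurable (φstar k))
    (hφstar : ∀ k < N, ∀ s,
      φstar k s = true ↔ g k s ≥ ∫ s', (h k s s' + V (k + 1) s') ∂(κ k s))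
    -- its value functions W*
    (Wstar : ℕ → S → ℝ)
    (hWstarN : ∀ s, Wstar N s = g N s)
    (hWstark : ∀ k < N, ∀ s, Wstar k s =
      if φstar k s then g k s else ∫ s', (h k s s' + Wstar (k + 1) s') ∂(κ k s)) :
    (∀ k ≤ N, ∀ s, Wstar k s = V k s) ∧
    -- in particular, φ* maximizes the value over all stopping policies
    (∀ (φ : ℕ → S → Bool), (∀ k < N, Measurable (φ k)) →
      ∀ (W : ℕ → S → ℝ), (∀ s, W N s = g N s) →
        (∀ k < N, ∀ s, W k s =
          if φ k s then g k s else ∫ s', (h k s s' + W (k + 1) s') ∂(κ k s)) →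
        ∀ s₀, W 0 s₀ ≤ Wstar 0 s₀) := by
  -- Part 1: Wstar = V, by downward induction
  have hVprops := osp_V_props N κ hκ g h hg_meas hg_bdd hh_meas hh_bdd V hVN hVk
  have main : ∀ d k, k + d = N → ∀ s, Wstar k s = V k s := by
    intro d
    induction d with
    | zero =>
      intro k hk s
      simp only [Nat.add_zero] at hk
      subst hk
      rw [hWstarN s, hVN s]
    | succ d ih =>
      intro k hk s
      have hkN : k < N := by omega
      have hk1 : (k + 1) + d = N := by omega
      have hIeq : (∫ s', (h k s s' + Wstar (k + 1) s') ∂(κ k s)) =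
          ∫ s', (h k s s' + V (k + 1) s') ∂(κ k s) := by
        apply integral_congr_ae
        exact ae_of_all _ fun s' => by simp only [ih (k + 1) hk1]
      rw [hWstark k hkN s, hVk k hkN s]
      by_cases hb : φstar k s = true
      · have hge := (hφstar k hkN s).mp hb
        simp only [hb, if_true]
        exact (max_eq_left hge).symm
      · simp only [hb, if_false]
        have hlt : ¬ g k s ≥ ∫ s', (h k s s' + V (k + 1) s') ∂(κ k s) := by
          intro hge; exact hb ((hφstar k hkN s).mpr hge)
        rw [hIeq]
        exact (max_eq_right (le_of_not_ge hlt)).symm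
  have part1 : ∀ k ≤ N, ∀ s, Wstar k s = V k s := fun k hk s =>
    main (N - k) k (by omega) s
  refine ⟨part1, ?_⟩
  -- Part 2: any policy's value is ≤ V
  intro φ hφ W hWN hWk s₀
  have hWprops := osp_W_props N κ hκ g h hg_meas hg_bdd hh_meas hh_bdd φ hφ W hWN hWk
  have hle : ∀ d k, k + d = N → ∀ s, W k s ≤ V k s := by
    intro d
    induction d with
    | zero =>
      intro k hk s
      simp only [Nat.add_zero] at hk
      subst hk
      rw [hWN s, hVN s]
    | succ d ih =>
      intro k hk s
      have hkN : k < N := by omega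
      have hk1 : (k + 1) + d = N := by omega
      haveI := hκ k hkN
      obtain ⟨hVm, CV, hCV⟩ := hVprops d (k + 1) hk1
      obtain ⟨hWm, CW, hCW⟩ := hWprops d (k + 1) hk1
      obtain ⟨Ch, hCh⟩ := hh_bdd k hkN
      rw [hWk k hkN s, hVk k hkN s]
      by_cases hb : φ k s = true
      · simp only [hb, if_true]
        exact le_max_left _ _
      · simp only [hb, if_false]
        refine le_trans ?_ (le_max_right _ _)
        apply integral_mono
        · exact osp_integrable (κ k s)
            (((hh_meas k hkN).comp measurable_prodMk_left).add hWm)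
            (fun s' => (abs_add_le _ _).trans (add_le_add (hCh s s') (hCW s')))
        · exact osp_integrable (κ k s)
            (((hh_meas k hkN).comp measurable_prodMk_left).add hVm)
            (fun s' => (abs_add_le _ _).trans (add_le_add (hCh s s') (hCV s')))
        · intro s'
          exact add_le_add_right (ih (k + 1) hk1 s') _
  have := hle N 0 (by omega) s₀
  rw [part1 0 (Nat.zero_le N) s₀]
  exact this
end

section
/- In the finite-horizon optimal stopping setup, fix an arbitrary stopping policy φ. Let W^{T,φ} be its value functions in the terminal formulation (stop rewards g_k, continuation rewards h ≡ 0) and W^{I,φ} its value functions in the incremental formulation (stop rewards identically 0, per-transition continuation reward d_k(s,s') = g_{k+1}(s') − g_k(s)). Then W^{T,φ}_k(s) = W^{I,φ}_k(s) + g_k(s) for every 0 ≤ k ≤ N and s ∈ S. In particular, if g_0(s_0) = 0 at the initial state s_0, the expected utilities of the two reward formulations coincide: W^{T,φ}_0(s_0) = W^{I,φ}_0(s_0) (Terminal–Incremental Equivalence). -/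
open MeasureTheory ProbabilityTheory

/-- **Terminal–Incremental Equivalence for an arbitrary stopping policy.**
For any stopping policy `φ`, its value functions in the terminal formulation
(stop rewards `g k`, continuation rewards `0`) and in the incremental formulation
(stop rewards `0`, continuation reward `d k s s' = g (k+1) s' − g k s`) satisfy
`W^T k s = W^I k s + g k s` for all `k ≤ N` and `s`; in particular if `g 0 s₀ = 0`
then the expected utilities coincide: `W^T 0 s₀ = W^I 0 s₀`. -/
theorem terminal_incremental_equivalence_policy_values
    {S : Type*} [MeasurableSpace S] (N : ℕ)
    (κ : ℕ → ProbabilityTheory.Kernel S S) (hκ : ∀ k < N, IsMarkovKernel (κ k))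
    (g : ℕ → S → ℝ)
    (hg_meas : ∀ k ≤ N, Measurable (g k))
    (hg_bdd : ∀ k ≤ N, ∃ C : ℝ, ∀ s, |g k s| ≤ C)
    (φ : ℕ → S → Bool) (hφ_meas : ∀ k < N, Measurable (φ k))
    -- terminal-formulation value functions of φ
    (WT : ℕ → S → ℝ)
    (hWTN : ∀ s, WT N s = g N s)
    (hWTk : ∀ k < N, ∀ s, WT k s =
      if φ k s then g k s else ∫ s', WT (k + 1) s' ∂(κ k s))
    -- incremental-formulation value functions of φ
    (WI : ℕ → S → ℝ)
    (hWIN : ∀ s, WI N s = 0)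
    (hWIk : ∀ k < N, ∀ s, WI k s =
      if φ k s then 0 else ∫ s', (g (k + 1) s' - g k s + WI (k + 1) s') ∂(κ k s)) :
    (∀ k ≤ N, ∀ s, WT k s = WI k s + g k s) ∧
    (∀ s₀, g 0 s₀ = 0 → WT 0 s₀ = WI 0 s₀) := by
  have key : ∀ k, k ≤ N →
      Measurable (WT k) ∧ (∃ C : ℝ, ∀ s, |WT k s| ≤ C) ∧
        (∀ s, WT k s = WI k s + g k s) := by
    intro k hk
    refine Nat.decreasingInduction'
      (P := fun j => Measurable (WT j) ∧ (∃ C : ℝ, ∀ s, |WT j s| ≤ C) ∧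
        (∀ s, WT j s = WI j s + g j s)) ?_ hk ?_
    case refine_2 =>
      refine ⟨?_, ?_, ?_⟩
      · have := hg_meas N le_rfl
        have : WT N = g N := funext hWTN
        rw [this]; exact hg_meas N le_rfl
      · obtain ⟨C, hC⟩ := hg_bdd N le_rfl
        exact ⟨C, fun s => by rw [hWTN]; exact hC s⟩
      · intro s; rw [hWTN, hWIN]; ring
    case refine_1 =>
      intro k hkN hkk ih
      obtain ⟨ihMeas, ⟨C, hC⟩, ihEq⟩ := ih
      haveI := hκ k hkN
      -- integrability of WT (k+1) w.r.t. any probability measure κ k s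
      have hint : ∀ s, Integrable (WT (k + 1)) (κ k s) := by
        intro s
        refine (integrable_const C).mono' ihMeas.aestronglyMeasurable ?_
        exact Filter.Eventually.of_forall fun s' => by
          simpa [Real.norm_eq_abs] using hC s'
      have hIntMeas : Measurable fun s => ∫ s', WT (k + 1) s' ∂(κ k s) := by
        have hf : StronglyMeasurable fun p : S × S => WT (k + 1) p.2 :=
          (ihMeas.comp measurable_snd).stronglyMeasurable
        exact hf.integral_kernel_prod_right'.measurable
      have hcond : MeasurableSet {s | φ k s = true} :=
        (hφ_meas k hkN) (measurableSet_singleton true)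
      refine ⟨?_, ?_, ?_⟩
      · have : WT k = fun s => if φ k s then g k s else
            ∫ s', WT (k + 1) s' ∂(κ k s) := funext (hWTk k hkN)
        rw [this]
        exact Measurable.ite hcond (hg_meas k hkN.le) hIntMeas
      · obtain ⟨C1, hC1⟩ := hg_bdd k hkN.le
        refine ⟨max C1 C, fun s => ?_⟩
        rw [hWTk k hkN]
        by_cases h : φ k s
        · simp only [h, if_true]
          exact (hC1 s).trans (le_max_left _ _)
        · simp only [h, Bool.false_eq_true, if_false]
          refine le_trans ?_ (le_max_right C1 C)
          calc |∫ s', WT (k + 1) s' ∂(κ k s)|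
              ≤ C * ((κ k s) Set.univ).toReal := by
                simpa [Real.norm_eq_abs] using
                  norm_integral_le_of_norm_le_const (μ := κ k s)
                    (f := WT (k + 1)) (C := C)
                    (Filter.Eventually.of_forall fun s' => by
                      simpa [Real.norm_eq_abs] using hC s')
            _ = C := by simp
      · intro s
        rw [hWTk k hkN, hWIk k hkN]
        by_cases h : φ k s
        · simp [h]
        · simp only [h, Bool.false_eq_true, if_false]
          have hcongr : ∀ s', g (k + 1) s' - g k s + WI (k + 1) s'
              = WT (k + 1) s' - g k s := by
            intro s'; have := ihEq s'; linarith
          have : (∫ s', (g (k + 1) s' - g k s + WI (k + 1) s') ∂(κ k s))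
              = (∫ s', WT (k + 1) s' ∂(κ k s)) - g k s := by
            simp_rw [hcongr]
            rw [integral_sub (hint s) (integrable_const _), integral_const]
            simp
          rw [this]; ring
  refine ⟨fun k hk s => (key k hk).2.2 s, fun s₀ h0 => ?_⟩
  have := (key 0 (Nat.zero_le N)).2.2 s₀
  rw [this, h0, add_zero]
end

section
/- In the finite-horizon optimal stopping setup, with V^T the Snell envelope of the terminal formulation (stop rewards g_k, continuation rewards h ≡ 0) and V^I the Snell envelope of the incremental formulation (stop rewards identically 0, per-transition continuation reward d_k(s,s') = g_{k+1}(s') − g_k(s)), the optimal stopping sets of the two formulations coincide at every stage k < N: { s ∈ S : g_k(s) ≥ ∫ V^T_{k+1}(s') dκ_k(s)(ds') } = { s ∈ S : 0 ≥ ∫ (g_{k+1}(s') − g_k(s) + V^I_{k+1}(s')) dκ_k(s)(ds') }. -/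
open MeasureTheory ProbabilityTheory

/-- **The optimal stopping sets of the terminal and incremental formulations coincide.**
With `V^T` the Snell envelope of the terminal formulation (stop rewards `g k`,
continuation rewards `0`) and `V^I` the Snell envelope of the incremental formulation
(stop rewards `0`, continuation reward `g (k+1) s' − g k s`), at every stage `k < N`:
`{s | g k s ≥ ∫ V^T (k+1) dκ k s} = {s | 0 ≥ ∫ (g (k+1) s' − g k s + V^I (k+1) s') dκ k s}`. -/
theorem optimal_stopping_sets_coincide
    {S : Type*} [MeasurableSpace S] (N : ℕ)
    (κ : ℕ → ProbabilityTheory.Kernel S S) (hκ : ∀ k < N, IsMarkovKernel (κ k))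
    (g : ℕ → S → ℝ)
    (hg_meas : ∀ k ≤ N, Measurable (g k))
    (hg_bdd : ∀ k ≤ N, ∃ C : ℝ, ∀ s, |g k s| ≤ C)
    -- terminal-formulation Snell envelope
    (VT : ℕ → S → ℝ)
    (hVTN : ∀ s, VT N s = g N s)
    (hVTk : ∀ k < N, ∀ s, VT k s =
      max (g k s) (∫ s', VT (k + 1) s' ∂(κ k s)))
    -- incremental-formulation Snell envelope
    (VI : ℕ → S → ℝ)
    (hVIN : ∀ s, VI N s = 0)
    (hVIk : ∀ k < N, ∀ s, VI k s =
      max 0 (∫ s', (g (k + 1) s' - g k s + VI (k + 1) s') ∂(κ k s))) :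
    ∀ k < N,
      {s : S | g k s ≥ ∫ s', VT (k + 1) s' ∂(κ k s)} =
      {s : S | 0 ≥ ∫ s', (g (k + 1) s' - g k s + VI (k + 1) s') ∂(κ k s)} := by
  -- Key: VT k = g k + VI k, with VI measurable and bounded (downward induction).
  have key : ∀ d k, k + d = N →
      Measurable (VI k) ∧ (∃ C : ℝ, ∀ s, |VI k s| ≤ C) ∧
      ∀ s, VT k s = g k s + VI k s := by
    intro d
    induction d with
    | zero =>
      intro k hk
      have hkN : k = N := by omega
      have hz : VI k = fun _ => (0:ℝ) := by rw [hkN]; exact funext hVIN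
      refine ⟨by rw [hz]; exact measurable_const,
        ⟨0, fun s => by simp [hkN, hVIN]⟩, fun s => by simp [hkN, hVIN, hVTN]⟩
    | succ d ih =>
      intro k hk
      have hkN : k < N := by omega
      obtain ⟨m1, ⟨C, hC⟩, heq⟩ := ih (k + 1) (by omega)
      haveI := hκ k hkN
      have hgk : Measurable (g k) := hg_meas k (le_of_lt hkN)
      have hgk1 : Measurable (g (k + 1)) := hg_meas (k + 1) hkN
      -- measurability of the integrand as a function on S × S
      have hF : Measurable (Function.uncurry
          fun s s' => g (k + 1) s' - g k s + VI (k + 1) s') :=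
        ((hgk1.comp measurable_snd).sub (hgk.comp measurable_fst)).add
          (m1.comp measurable_snd)
      have hInt : Measurable fun s => ∫ s', (g (k + 1) s' - g k s + VI (k + 1) s') ∂(κ k s) :=
        (MeasureTheory.StronglyMeasurable.integral_kernel_prod_right
          (hF.stronglyMeasurable)).measurable
      obtain ⟨Cg, hCg⟩ := hg_bdd k (le_of_lt hkN)
      obtain ⟨Cg1, hCg1⟩ := hg_bdd (k + 1) hkN
      refine ⟨?_, ?_, ?_⟩
      · have : Measurable fun s => max 0
            (∫ s', (g (k + 1) s' - g k s + VI (k + 1) s') ∂(κ k s)) :=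
          measurable_const.max hInt
        simpa [funext (hVIk k hkN)] using this
      · refine ⟨max 0 (Cg1 + Cg + C), fun s => ?_⟩
        rw [hVIk k hkN s]
        have hb : ∀ s', ‖g (k + 1) s' - g k s + VI (k + 1) s'‖ ≤ Cg1 + Cg + C := by
          intro s'
          have := hC s'
          have := hCg s
          have := hCg1 s'
          simp only [Real.norm_eq_abs] at *
          calc |g (k + 1) s' - g k s + VI (k + 1) s'|
              ≤ |g (k + 1) s' - g k s| + |VI (k + 1) s'| := abs_add_le _ _
            _ ≤ (|g (k + 1) s'| + |g k s|) + |VI (k + 1) s'| := by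
                gcongr; exact abs_sub _ _
            _ ≤ Cg1 + Cg + C := by linarith
        have hmeas : IsProbabilityMeasure ((κ k) s) := IsMarkovKernel.isProbabilityMeasure s
        have hnorm : ‖∫ s', (g (k + 1) s' - g k s + VI (k + 1) s') ∂(κ k s)‖ ≤
            (Cg1 + Cg + C) * ((κ k s) Set.univ).toReal :=
          norm_integral_le_of_norm_le_const (Filter.Eventually.of_forall hb)
        rw [measure_univ, ENNReal.toReal_one, mul_one] at hnorm
        rw [abs_of_nonneg (le_max_left _ _)]
        exact max_le_max le_rfl (le_of_abs_le (by simpa [Real.norm_eq_abs] using hnorm))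
      · intro s
        haveI hmeas : IsProbabilityMeasure ((κ k) s) := IsMarkovKernel.isProbabilityMeasure s
        -- integrability
        have hIg1 : Integrable (g (k + 1)) ((κ k) s) := by
          refine (integrable_const Cg1).mono' hgk1.aestronglyMeasurable ?_
          exact Filter.Eventually.of_forall fun s' => by
            simpa [Real.norm_eq_abs] using hCg1 s'
        have hIVI : Integrable (VI (k + 1)) ((κ k) s) := by
          refine (integrable_const C).mono' m1.aestronglyMeasurable ?_
          exact Filter.Eventually.of_forall fun s' => by
            simpa [Real.norm_eq_abs] using hC s'
        have hintEq : (∫ s', (g (k + 1) s' - g k s + VI (k + 1) s') ∂(κ k s)) =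
            (∫ s', VT (k + 1) s' ∂(κ k s)) - g k s := by
          have h1 : (∫ s', VT (k + 1) s' ∂(κ k s)) =
              (∫ s', g (k + 1) s' ∂(κ k s)) + ∫ s', VI (k + 1) s' ∂(κ k s) := by
            rw [← integral_add hIg1 hIVI]
            exact integral_congr_ae (Filter.Eventually.of_forall fun s' => heq s')
          have hsub : Integrable (fun s' => g (k + 1) s' - g k s) ((κ k) s) :=
            hIg1.sub (integrable_const _)
          have h2 : (∫ s', (g (k + 1) s' - g k s + VI (k + 1) s') ∂(κ k s)) =
              (∫ s', (g (k + 1) s' - g k s) ∂(κ k s)) + ∫ s', VI (k + 1) s' ∂(κ k s) :=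
            integral_add hsub hIVI
          have h3 : (∫ s', (g (k + 1) s' - g k s) ∂(κ k s)) =
              (∫ s', g (k + 1) s' ∂(κ k s)) - g k s := by
            rw [integral_sub hIg1 (integrable_const _), integral_const, measureReal_def, measure_univ,
              ENNReal.toReal_one, one_smul]
          rw [h1, h2, h3]; ring
        rw [hVTk k hkN s, hVIk k hkN s, hintEq]
        rcases le_total (g k s) ((∫ s', VT (k + 1) s' ∂(κ k s)) - g k s + g k s) with h | h
        · rw [max_eq_right (by linarith), max_eq_right (by linarith)]; ring
        · rw [max_eq_left (by linarith), max_eq_left (by linarith)]; ring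
  intro k hkN
  haveI := hκ k hkN
  obtain ⟨m1, ⟨C, hC⟩, heq⟩ := key (N - (k + 1)) (k + 1) (by omega)
  ext s
  haveI hmeas : IsProbabilityMeasure ((κ k) s) := IsMarkovKernel.isProbabilityMeasure s
  obtain ⟨Cg1, hCg1⟩ := hg_bdd (k + 1) hkN
  have hgk1 : Measurable (g (k + 1)) := hg_meas (k + 1) hkN
  have hIg1 : Integrable (g (k + 1)) ((κ k) s) := by
    refine (integrable_const Cg1).mono' hgk1.aestronglyMeasurable ?_
    exact Filter.Eventually.of_forall fun s' => by simpa [Real.norm_eq_abs] using hCg1 s'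
  have hIVI : Integrable (VI (k + 1)) ((κ k) s) := by
    refine (integrable_const C).mono' m1.aestronglyMeasurable ?_
    exact Filter.Eventually.of_forall fun s' => by simpa [Real.norm_eq_abs] using hC s'
  have hintEq : (∫ s', (g (k + 1) s' - g k s + VI (k + 1) s') ∂(κ k s)) =
      (∫ s', VT (k + 1) s' ∂(κ k s)) - g k s := by
    have h1 : (∫ s', VT (k + 1) s' ∂(κ k s)) =
        (∫ s', g (k + 1) s' ∂(κ k s)) + ∫ s', VI (k + 1) s' ∂(κ k s) := by
      rw [← integral_add hIg1 hIVI]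
      exact integral_congr_ae (Filter.Eventually.of_forall fun s' => heq s')
    have hsub : Integrable (fun s' => g (k + 1) s' - g k s) ((κ k) s) :=
      hIg1.sub (integrable_const _)
    have h2 : (∫ s', (g (k + 1) s' - g k s + VI (k + 1) s') ∂(κ k s)) =
        (∫ s', (g (k + 1) s' - g k s) ∂(κ k s)) + ∫ s', VI (k + 1) s' ∂(κ k s) :=
      integral_add hsub hIVI
    have h3 : (∫ s', (g (k + 1) s' - g k s) ∂(κ k s)) =
        (∫ s', g (k + 1) s' ∂(κ k s)) - g k s := by
      rw [integral_sub hIg1 (integrable_const _), integral_const, measureReal_def, measure_univ,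
        ENNReal.toReal_one, one_smul]
    rw [h1, h2, h3]; ring
  simp only [Set.mem_setOf_eq, hintEq]
  constructor <;> intro h <;> linarith
end

section
/- Expected information gain in the linear-Gaussian model: fix m ∈ ℝ, σ² > 0, σ_ε² > 0, and ξ ∈ ℝ. Let v' = σ²σ_ε²/(σ_ε² + σ²ξ²), m'(y) = v' · ( m/σ² + yξ/σ_ε² ), and let P = gaussianReal (ξm) (ξ²σ² + σ_ε²) be the predictive distribution of y. Then the expected posterior-to-prior Kullback–Leibler divergence equals ∫ KL( gaussianReal (m'(y)) v' ‖ gaussianReal m σ² ) dP(y) = (1/2) · log(σ²/v') = (1/2) · log( 1 + σ²ξ²/σ_ε² ). -/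
open MeasureTheory ProbabilityTheory
open scoped NNReal

/-- The Kullback–Leibler divergence `KL(P‖Q) = ∫ log (dP/dQ) dP`. -/
noncomputable def klDiv {Θ : Type*} [MeasurableSpace Θ] (P Q : Measure Θ) : ℝ :=
  ∫ θ, Real.log ((P.rnDeriv Q θ).toReal) ∂P


section AuxGaussKL
open Real
open scoped ENNReal

lemma auxB1 {b : ℝ} (hb : 0 < b) : ∫ x : ℝ, x * rexp (-(b * x ^ 2)) = 0 := by
  have h := (Measure.measurePreserving_neg (volume : Measure ℝ)).integral_comp
    (Homeomorph.neg ℝ).measurableEmbedding (fun x : ℝ => x * rexp (-(b * x ^ 2)))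
  simp only [neg_sq] at h
  have h2 : ∫ x : ℝ, -(x * rexp (-(b * x ^ 2))) = ∫ x : ℝ, x * rexp (-(b * x ^ 2)) := by
    simpa [neg_mul] using h
  rw [integral_neg] at h2
  linarith

lemma auxB2 {b : ℝ} (hb : 0 < b) :
    ∫ x : ℝ, x ^ 2 * rexp (-(b * x ^ 2)) = Real.sqrt (π / b) / (2 * b) := by
  have habs : ∀ x : ℝ, |x| ^ 2 * rexp (-(b * |x| ^ 2)) = x ^ 2 * rexp (-(b * x ^ 2)) := by
    intro x; rw [sq_abs]
  have hdb := integral_comp_abs (f := fun x : ℝ => x ^ 2 * rexp (-(b * x ^ 2)))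
  simp only [habs] at hdb
  rw [hdb]
  have h2 : ∫ x in Set.Ioi (0:ℝ), x ^ 2 * rexp (-(b * x ^ 2))
      = ∫ x in Set.Ioi (0:ℝ), x ^ (2:ℝ) * rexp (-b * x ^ (2:ℝ)) := by
    norm_num [Real.rpow_natCast, neg_mul]
  rw [h2, integral_rpow_mul_exp_neg_mul_rpow (by norm_num) (by norm_num) hb]
  rw [show ((2:ℝ)+1)/2 = 1/2 + 1 by norm_num, Real.Gamma_add_one (by norm_num),
    Real.Gamma_one_half_eq, show (-((2:ℝ)+1)/2) = -(1 + 1/2) by norm_num]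
  rw [Real.rpow_neg hb.le, Real.rpow_add hb, Real.rpow_one, ← Real.sqrt_eq_rpow,
    Real.sqrt_div pi_pos.le]
  have hsb : Real.sqrt b ≠ 0 := by positivity
  field_simp

lemma auxI2 {b : ℝ} (hb : 0 < b) : Integrable fun x : ℝ => x ^ 2 * rexp (-(b * x ^ 2)) := by
  have := integrable_rpow_mul_exp_neg_mul_sq hb (s := 2) (by norm_num)
  simpa [Real.rpow_natCast, neg_mul] using this

lemma aux_gauss_withDensity (μ : ℝ) {v : ℝ≥0} (hv : v ≠ 0) :
    gaussianReal μ v = volume.withDensity (fun x => ((gaussianPDFReal μ v x).toNNReal : ℝ≥0∞)) := by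
  rw [gaussianReal_of_var_ne_zero μ hv]; rfl

lemma aux_integral_gaussianReal (μ : ℝ) {v : ℝ≥0} (hv : v ≠ 0) (g : ℝ → ℝ) :
    ∫ x, g x ∂(gaussianReal μ v) = ∫ x, gaussianPDFReal μ v x * g x := by
  rw [aux_gauss_withDensity μ hv,
    integral_withDensity_eq_integral_smul (measurable_gaussianPDFReal μ v).real_toNNReal g]
  congr 1 with x
  simp [NNReal.smul_def, Real.coe_toNNReal _ (gaussianPDFReal_nonneg μ v x)]

lemma aux_integrable_gaussianReal_iff (μ : ℝ) {v : ℝ≥0} (hv : v ≠ 0) (g : ℝ → ℝ) :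
    Integrable g (gaussianReal μ v) ↔
      Integrable (fun x => gaussianPDFReal μ v x * g x) volume := by
  rw [aux_gauss_withDensity μ hv,
    integrable_withDensity_iff_integrable_smul (measurable_gaussianPDFReal μ v).real_toNNReal]
  constructor <;> intro h <;> refine h.congr (ae_of_all _ fun x => ?_) <;>
    simp [NNReal.smul_def, Real.coe_toNNReal _ (gaussianPDFReal_nonneg μ v x)]

lemma aux_pdf_shift (μ : ℝ) (v : ℝ≥0) (c x : ℝ) :
    gaussianPDFReal μ v x * (x - c) ^ 2
      = (√(2 * π * v))⁻¹ * ((x - μ) ^ 2 * rexp (-(((2:ℝ) * v)⁻¹ * (x - μ) ^ 2)))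
        + (2 * (μ - c)) * ((√(2 * π * v))⁻¹ * ((x - μ) * rexp (-(((2:ℝ) * v)⁻¹ * (x - μ) ^ 2))))
        + (μ - c) ^ 2 * gaussianPDFReal μ v x := by
  have : -(x - μ) ^ 2 / (2 * (v:ℝ)) = -(((2:ℝ) * v)⁻¹ * (x - μ) ^ 2) := by
    rw [neg_div, div_eq_inv_mul]
  rw [gaussianPDFReal, this]
  ring

lemma auxM (μ : ℝ) {v : ℝ≥0} (hv : v ≠ 0) (c : ℝ) :
    ∫ x, (x - c) ^ 2 ∂(gaussianReal μ v) = (v : ℝ) + (μ - c) ^ 2 := by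
  have hvR : (0:ℝ) < v := lt_of_le_of_ne v.coe_nonneg (by exact_mod_cast hv.symm)
  set b : ℝ := ((2:ℝ) * v)⁻¹ with hbdef
  have hb : 0 < b := by positivity
  rw [aux_integral_gaussianReal μ hv]
  simp only [aux_pdf_shift μ v c]
  have hI1 : Integrable fun x : ℝ => x * rexp (-(b * x ^ 2)) := by
    simpa [neg_mul] using integrable_mul_exp_neg_mul_sq hb
  rw [integral_add, integral_add]
  · rw [integral_const_mul, integral_const_mul, integral_const_mul, integral_const_mul]
    have s2 : ∫ x : ℝ, (x - μ) ^ 2 * rexp (-(b * (x - μ) ^ 2))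
        = √(π / b) / (2 * b) := by
      rw [← auxB2 hb]
      exact integral_sub_right_eq_self (fun t : ℝ => t ^ 2 * rexp (-(b * t ^ 2))) μ
    have s1 : ∫ x : ℝ, (x - μ) * rexp (-(b * (x - μ) ^ 2)) = 0 := by
      rw [← auxB1 hb]
      exact integral_sub_right_eq_self (fun t : ℝ => t * rexp (-(b * t ^ 2))) μ
    rw [s2, s1, integral_gaussianPDFReal_eq_one μ hv]
    have hππ : π / b = 2 * π * v := by rw [hbdef, div_inv_eq_mul]; ring
    rw [hππ]
    have hsq : (√(2 * π * (v:ℝ)))⁻¹ * √(2 * π * (v:ℝ)) = 1 :=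
      inv_mul_cancel₀ (by positivity)
    have h2b : (2 * b)⁻¹ = (v : ℝ) := by rw [hbdef]; field_simp
    rw [mul_zero, mul_zero, mul_one, div_eq_mul_inv, ← mul_assoc, hsq, one_mul, h2b]
    ring
  · exact ((auxI2 hb).comp_sub_right μ).const_mul _
  · exact ((hI1.comp_sub_right μ).const_mul _).const_mul _
  · exact (((auxI2 hb).comp_sub_right μ).const_mul _).add
      (((hI1.comp_sub_right μ).const_mul _).const_mul _)
  · exact (integrable_gaussianPDFReal μ v).const_mul _

lemma auxMI (μ : ℝ) {v : ℝ≥0} (hv : v ≠ 0) (c : ℝ) :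
    Integrable (fun x => (x - c) ^ 2) (gaussianReal μ v) := by
  have hvR : (0:ℝ) < v := lt_of_le_of_ne v.coe_nonneg (by exact_mod_cast hv.symm)
  set b : ℝ := ((2:ℝ) * v)⁻¹ with hbdef
  have hb : 0 < b := by positivity
  have hI1 : Integrable fun x : ℝ => x * rexp (-(b * x ^ 2)) := by
    simpa [neg_mul] using integrable_mul_exp_neg_mul_sq hb
  rw [aux_integrable_gaussianReal_iff μ hv]
  simp only [aux_pdf_shift μ v c]
  exact ((((auxI2 hb).comp_sub_right μ).const_mul _).add
    (((hI1.comp_sub_right μ).const_mul _).const_mul _)).add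
    ((integrable_gaussianPDFReal μ v).const_mul _)

lemma aux_rnDeriv_gauss_gauss (μ1 μ2 : ℝ) {v1 v2 : ℝ≥0} (h1 : v1 ≠ 0) (h2 : v2 ≠ 0) :
    (gaussianReal μ1 v1).rnDeriv (gaussianReal μ2 v2)
      =ᵐ[gaussianReal μ1 v1] fun x => gaussianPDF μ1 v1 x / gaussianPDF μ2 v2 x := by
  set f : ℝ → ℝ≥0∞ := fun x => gaussianPDF μ1 v1 x / gaussianPDF μ2 v2 x with hf
  have hfm : Measurable f := (measurable_gaussianPDF μ1 v1).div (measurable_gaussianPDF μ2 v2)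
  have hP : gaussianReal μ1 v1 = (gaussianReal μ2 v2).withDensity f := by
    rw [gaussianReal_of_var_ne_zero _ h1, gaussianReal_of_var_ne_zero _ h2,
      ← withDensity_mul _ (measurable_gaussianPDF μ2 v2) hfm]
    congr 1
    funext x
    simp only [Pi.mul_apply, hf]
    exact (ENNReal.mul_div_cancel (gaussianPDF_pos μ2 h2 x).ne' ENNReal.ofReal_ne_top).symm
  have hQ : (gaussianReal μ1 v1).rnDeriv (gaussianReal μ2 v2) =ᵐ[gaussianReal μ2 v2] f := by
    conv_lhs => rw [hP]
    exact Measure.rnDeriv_withDensity _ hfm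
  have hac : gaussianReal μ1 v1 ≪ gaussianReal μ2 v2 :=
    (gaussianReal_absolutelyContinuous _ h1).trans (gaussianReal_absolutelyContinuous' _ h2)
  exact hac.ae_eq hQ

lemma aux_log_pdf (μ : ℝ) {v : ℝ≥0} (hv : v ≠ 0) (x : ℝ) :
    Real.log (gaussianPDFReal μ v x)
      = -(1/2) * Real.log (2 * π * v) - (x - μ) ^ 2 / (2 * v) := by
  have hvR : (0:ℝ) < v := lt_of_le_of_ne v.coe_nonneg (by exact_mod_cast hv.symm)
  rw [gaussianPDFReal, Real.log_mul (by positivity) (Real.exp_pos _).ne', Real.log_exp,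
    Real.log_inv, Real.log_sqrt (by positivity)]
  ring

lemma aux_klDiv_gauss (μ1 μ2 : ℝ) {v1 v2 : ℝ≥0} (h1 : v1 ≠ 0) (h2 : v2 ≠ 0) :
    klDiv (gaussianReal μ1 v1) (gaussianReal μ2 v2)
      = (1/2) * Real.log ((v2:ℝ)/(v1:ℝ)) + ((v1:ℝ) + (μ1 - μ2)^2)/(2*(v2:ℝ)) - 1/2 := by
  have hv1R : (0:ℝ) < v1 := lt_of_le_of_ne v1.coe_nonneg (by exact_mod_cast h1.symm)
  have hv2R : (0:ℝ) < v2 := lt_of_le_of_ne v2.coe_nonneg (by exact_mod_cast h2.symm)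
  have key : ∀ x : ℝ,
      Real.log ((gaussianPDF μ1 v1 x / gaussianPDF μ2 v2 x).toReal)
        = (-(1/2) * Real.log (2 * π * v1) + (1/2) * Real.log (2 * π * v2))
          + (x - μ2) ^ 2 * (2 * (v2:ℝ))⁻¹ - (x - μ1) ^ 2 * (2 * (v1:ℝ))⁻¹ := by
    intro x
    rw [gaussianPDF, gaussianPDF, ← ENNReal.ofReal_div_of_pos (gaussianPDFReal_pos _ _ _ h2),
      ENNReal.toReal_ofReal (div_nonneg (gaussianPDFReal_nonneg _ _ _) (gaussianPDFReal_nonneg _ _ _)), Real.log_div (gaussianPDFReal_pos _ _ _ h1).ne'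
        (gaussianPDFReal_pos _ _ _ h2).ne', aux_log_pdf _ h1, aux_log_pdf _ h2]
    field_simp
    ring
  have hkl : klDiv (gaussianReal μ1 v1) (gaussianReal μ2 v2)
      = ∫ x, ((-(1/2) * Real.log (2 * π * v1) + (1/2) * Real.log (2 * π * v2))
          + (x - μ2) ^ 2 * (2 * (v2:ℝ))⁻¹ - (x - μ1) ^ 2 * (2 * (v1:ℝ))⁻¹)
          ∂(gaussianReal μ1 v1) := by
    rw [klDiv]
    refine integral_congr_ae ?_
    filter_upwards [aux_rnDeriv_gauss_gauss μ1 μ2 h1 h2] with x hx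
    rw [hx, key x]
  rw [hkl, integral_sub, integral_add, integral_const, integral_mul_const, integral_mul_const,
    auxM μ1 h1 μ2, auxM μ1 h1 μ1]
  · have hl : Real.log (2 * π * (v2:ℝ)) - Real.log (2 * π * (v1:ℝ))
        = Real.log ((v2:ℝ)/(v1:ℝ)) := by
      rw [Real.log_mul (by positivity) hv2R.ne', Real.log_mul (by positivity) hv1R.ne',
        Real.log_div hv2R.ne' hv1R.ne']
      ring
    simp only [measure_univ, probReal_univ, ENNReal.toReal_one, smul_eq_mul, one_mul]
    have e1 : -(1/2) * Real.log (2*π*(v1:ℝ)) + 1/2 * Real.log (2*π*(v2:ℝ))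
        = (1/2) * Real.log ((v2:ℝ)/(v1:ℝ)) := by rw [← hl]; ring
    have e2 : ((v1:ℝ) + (μ1 - μ1) ^ 2) * (2 * (v1:ℝ))⁻¹ = 1/2 := by
      field_simp
      ring
    rw [e1, e2]
    ring
  · exact integrable_const _
  · exact (auxMI μ1 h1 μ2).mul_const _
  · exact (integrable_const _).add ((auxMI μ1 h1 μ2).mul_const _)
  · exact (auxMI μ1 h1 μ1).mul_const _


end AuxGaussKL

/-- **Expected information gain in the linear-Gaussian model.**
With prior `N(m, σ²)`, likelihood `N(ξθ, σ_ε²)`, posterior variance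
`v' = σ²σ_ε²/(σ_ε² + σ²ξ²)`, posterior mean `m'(y) = v'(m/σ² + yξ/σ_ε²)`, and
predictive distribution `P = N(ξm, ξ²σ² + σ_ε²)`, the expected posterior-to-prior KL
divergence equals `(1/2) log(σ²/v') = (1/2) log(1 + σ²ξ²/σ_ε²)`. -/
theorem linear_gaussian_expected_information_gain
    (m σ2 σε2 ξ : ℝ) (hσ2 : 0 < σ2) (hσε2 : 0 < σε2)
    (v' : ℝ) (hv' : v' = σ2 * σε2 / (σε2 + σ2 * ξ ^ 2))
    (m' : ℝ → ℝ) (hm' : ∀ y, m' y = v' * (m / σ2 + y * ξ / σε2)) :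
    (∫ y, klDiv (gaussianReal (m' y) v'.toNNReal) (gaussianReal m σ2.toNNReal)
        ∂(gaussianReal (ξ * m) (ξ ^ 2 * σ2 + σε2).toNNReal))
      = (1 / 2) * Real.log (σ2 / v') ∧
    (1 / 2) * Real.log (σ2 / v') = (1 / 2) * Real.log (1 + σ2 * ξ ^ 2 / σε2) := by
  have hT : (0:ℝ) < σε2 + σ2 * ξ ^ 2 := by positivity
  have hv'pos : 0 < v' := by rw [hv']; positivity
  set s : ℝ := ξ ^ 2 * σ2 + σε2 with hs
  have hspos : 0 < s := by positivity
  have cv' : ((v'.toNNReal : ℝ≥0) : ℝ) = v' := Real.coe_toNNReal _ hv'pos.le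
  have cσ2 : ((σ2.toNNReal : ℝ≥0) : ℝ) = σ2 := Real.coe_toNNReal _ hσ2.le
  have cs : ((s.toNNReal : ℝ≥0) : ℝ) = s := Real.coe_toNNReal _ hspos.le
  have hv'0 : v'.toNNReal ≠ 0 := (Real.toNNReal_pos.mpr hv'pos).ne'
  have hσ20 : σ2.toNNReal ≠ 0 := (Real.toNNReal_pos.mpr hσ2).ne'
  have hs0 : s.toNNReal ≠ 0 := (Real.toNNReal_pos.mpr hspos).ne'
  set c : ℝ := v' * ξ / σε2 with hc
  have hlin : ∀ y, m' y - m = c * (y - ξ * m) := by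
    intro y
    rw [hm' y, hc, hv']
    field_simp
    ring
  set A : ℝ := (1/2) * Real.log (σ2 / v') + v' / (2 * σ2) - 1/2 with hA
  have hinner : ∀ y, klDiv (gaussianReal (m' y) v'.toNNReal) (gaussianReal m σ2.toNNReal)
      = A + (c ^ 2 / (2 * σ2)) * (y - ξ * m) ^ 2 := by
    intro y
    rw [aux_klDiv_gauss _ _ hv'0 hσ20]
    simp only [cv', cσ2]
    rw [hA, hlin y]
    field_simp
    ring
  constructor
  · simp only [hinner]
    rw [integral_add (integrable_const _) ((auxMI _ hs0 _).const_mul _), integral_const,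
      integral_const_mul, auxM _ hs0, cs]
    simp only [measure_univ, probReal_univ, ENNReal.toReal_one, smul_eq_mul, one_mul, sub_self]
    have key : v' * σε2 ^ 2 + v' ^ 2 * ξ ^ 2 * s = σ2 * σε2 ^ 2 := by
      rw [hs, hv']
      field_simp
      ring
    rw [hA, hc]
    field_simp
    linear_combination key
  · congr 2
    rw [hv']
    field_simp
end
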